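/- Let E : M_d(ℂ) → M_r(ℂ) be a quantum channel whose range is contained in a diagonal algebra; that is, there is an orthonormal basis {u_1, …, u_r} of ℂ^r such that E(X) ∈ span{u_i u_i* : 1 ≤ i ≤ r} for all X ∈ M_d(ℂ). Then E has a Holevo form: there exist positive semidefinite matrices F_1, …, F_r ∈ M_d(ℂ) with Σ_{i=1}^r F_i = I_d such that E(X) = Σ_{i=1}^r tr(F_i X) u_i u_i* for all X; in particular E is entanglement breaking. -/

import Mathlib

open Matrix ComplexOrder

private lemma dot_vecMulVec_mulVec {r : ℕ} (x v w y : Fin r → ℂ) :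
    x ⬝ᵥ (Matrix.vecMulVec v w) *ᵥ y = (x ⬝ᵥ v) * (w ⬝ᵥ y) := by
  simp only [dotProduct, mulVec, vecMulVec_apply, dotProduct, Finset.mul_sum,
    Finset.sum_mul]
  rw [Finset.sum_comm]
  apply Finset.sum_congr rfl; intro b _
  apply Finset.sum_congr rfl; intro a _
  ring

private lemma trace_vecMulVec_mul {r : ℕ} (v w : Fin r → ℂ)
    (M : Matrix (Fin r) (Fin r) ℂ) :
    (Matrix.vecMulVec v w * M).trace = w ⬝ᵥ M *ᵥ v := by
  simp only [trace, diag_apply, mul_apply, vecMulVec_apply, dotProduct, mulVec]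
  rw [Finset.sum_comm]
  apply Finset.sum_congr rfl; intro b _
  rw [Finset.mul_sum]
  apply Finset.sum_congr rfl; intro a _
  ring

private lemma posSemidef_sum {n : ℕ} {m : ℕ} (f : Fin m → Matrix (Fin n) (Fin n) ℂ)
    (h : ∀ k, (f k).PosSemidef) : (∑ k, f k).PosSemidef := by
  have hadd : ∀ A B : Matrix (Fin n) (Fin n) ℂ,
      A.PosSemidef → B.PosSemidef → (A + B).PosSemidef := by
    intro A B hA hB
    exact hA.add hB
  exact Finset.sum_induction f _ hadd Matrix.PosSemidef.zero (fun k _ => h k)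

/-- **Lemma.** A quantum channel `E : M_d(ℂ) → M_r(ℂ)` whose range is
contained in a diagonal algebra `span{u_i u_i*}` (with `{u_i}` an orthonormal basis of
`ℂ^r`) has a Holevo form `E(X) = Σ_i tr(F_i X) u_i u_i*` for a POVM `{F_i}`; in particular
`E` is entanglement breaking. -/
theorem channel_into_diagonal_algebra_is_entanglementBreaking {d r : ℕ}
    (E : Matrix (Fin d) (Fin d) ℂ → Matrix (Fin r) (Fin r) ℂ)
    (hE : ∃ (m : ℕ) (V : Fin m → Matrix (Fin r) (Fin d) ℂ),
      (∀ X, E X = ∑ i, V i * X * (V i)ᴴ) ∧ (∑ i, (V i)ᴴ * V i = 1))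
    (u : Fin r → (Fin r → ℂ))
    (hu : ∀ i j, star (u i) ⬝ᵥ u j = if i = j then (1 : ℂ) else 0)
    (hrange : ∀ X, E X ∈
      Submodule.span ℂ (Set.range fun i => Matrix.vecMulVec (u i) (star (u i)))) :
    ∃ F : Fin r → Matrix (Fin d) (Fin d) ℂ,
      (∀ i, (F i).PosSemidef) ∧ (∑ i, F i = 1) ∧
      (∀ X, E X = ∑ i, (F i * X).trace • Matrix.vecMulVec (u i) (star (u i))) := by
  obtain ⟨m, V, hVE, hV1⟩ := hE
  set P : Fin r → Matrix (Fin r) (Fin r) ℂ :=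
    fun i => Matrix.vecMulVec (u i) (star (u i)) with hP
  -- resolution of identity
  have hPsum : ∑ i, P i = 1 := by
    set U : Matrix (Fin r) (Fin r) ℂ := Matrix.of fun a i => u i a with hU
    have hUU : Uᴴ * U = 1 := by
      ext i j
      simpa [Matrix.mul_apply, Matrix.conjTranspose_apply, hU, dotProduct,
        Matrix.one_apply] using hu i j
    have hUU' : U * Uᴴ = 1 := mul_eq_one_comm.mp hUU
    ext a b
    have := congrFun (congrFun hUU' a) b
    simp only [Matrix.mul_apply, Matrix.conjTranspose_apply, hU, Matrix.of_apply] at this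
    simpa [hP, Matrix.sum_apply, Matrix.vecMulVec_apply] using this
  refine ⟨fun i => ∑ k, (V k)ᴴ * P i * V k, ?_, ?_, ?_⟩
  · intro i
    refine _root_.posSemidef_sum _ (fun k => ?_)
    have : (V k)ᴴ * P i * V k
        = (Matrix.replicateRow Unit (star (u i)) * V k)ᴴ * (Matrix.replicateRow Unit (star (u i)) * V k) := by
      simp only [hP]
      rw [Matrix.vecMulVec_eq Unit, Matrix.conjTranspose_mul, Matrix.conjTranspose_replicateRow,
        star_star]
      simp only [Matrix.mul_assoc]
    rw [this]
    exact Matrix.posSemidef_conjTranspose_mul_self _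
  · rw [Finset.sum_comm]
    calc ∑ k, ∑ i, (V k)ᴴ * P i * V k
        = ∑ k, (V k)ᴴ * (∑ i, P i) * V k := by
          refine Finset.sum_congr rfl (fun k _ => ?_)
          rw [Matrix.mul_sum, Matrix.sum_mul]
      _ = 1 := by rw [hPsum]; simpa using hV1
  · intro X
    obtain ⟨c, hc⟩ := (Submodule.mem_span_range_iff_exists_fun ℂ).mp (hrange X)
    have htr : ∀ j, ((∑ k, (V k)ᴴ * P j * V k) * X).trace = c j := by
      intro j
      have h1 : ((∑ k, (V k)ᴴ * P j * V k) * X).trace = (P j * E X).trace := by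
        rw [Finset.sum_mul, Matrix.trace_sum, hVE, Finset.mul_sum, Matrix.trace_sum]
        refine Finset.sum_congr rfl (fun k _ => ?_)
        rw [Matrix.mul_assoc, Matrix.mul_assoc, Matrix.trace_mul_comm,
          Matrix.mul_assoc, Matrix.mul_assoc]
      rw [h1, ← hc, Matrix.mul_sum, Matrix.trace_sum]
      have h2 : ∀ i, (P j * c i • P i).trace
          = c i * ((if j = i then (1:ℂ) else 0) * if i = j then (1:ℂ) else 0) := by
        intro i
        rw [Matrix.mul_smul, Matrix.trace_smul, smul_eq_mul, hP,
          trace_vecMulVec_mul, dot_vecMulVec_mulVec, ← hu j i, ← hu i j]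
      simp only [h2]
      simp [eq_comm]
    rw [← hc]
    refine Finset.sum_congr rfl (fun i _ => ?_)
    rw [htr i]
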